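/- For every μ > π√3/2, the infimum of the energy E(u) = (1/2)∫_ℝ |u′|² − (1/6)∫_ℝ |u|⁶ over all u ∈ H¹(ℝ) satisfying ‖u‖_{L²(ℝ)}² = μ and u(x) = 0 for all x ∉ [0,1] equals −∞. (In particular there exists such a compactly supported u with E(u) < 0, and the mass-preserving rescaling v_λ(x) = √λ·v(λx), which shrinks the support and satisfies E(v_λ) = λ²E(v), drives the energy to −∞.) -/

import Mathlib

open MeasureTheory Real Set

noncomputable section

/-- `u ∈ H¹(ℝ)` with weak derivative `u'`. -/
def IsH1Line (u u' : ℝ → ℝ) : Prop :=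
  (∀ x : ℝ, u x = u 0 + ∫ t in (0:ℝ)..x, u' t) ∧
  MemLp u 2 volume ∧ MemLp u' 2 volume

/-- The `L²`-critical NLS energy on the line. -/
def energyLine (u u' : ℝ → ℝ) : ℝ :=
  (1 / 2) * (∫ x : ℝ, u' x ^ 2) - (1 / 6) * (∫ x : ℝ, u x ^ 6)

namespace NLSAux

open Filter Topology

def sR (R : ℝ) : ℝ := (Real.cosh R)⁻¹

def f3 (R x : ℝ) : ℝ := if -(R + 1) ≤ x then Real.sqrt (sR R) * (x + (R + 1)) else 0
def f2 (R x : ℝ) : ℝ := if -R ≤ x then Real.sqrt ((Real.cosh x)⁻¹) else f3 R x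
def f1 (R x : ℝ) : ℝ := if R ≤ x then Real.sqrt (sR R) * ((R + 1) - x) else f2 R x
/-- truncated ground-state profile: `sech^{1/2}` core with linear tails. -/
def fP (R x : ℝ) : ℝ := if R + 1 ≤ x then 0 else f1 R x

def d3 (R x : ℝ) : ℝ := if -(R + 1) ≤ x then Real.sqrt (sR R) else 0
def d2 (R x : ℝ) : ℝ :=
  if -R ≤ x then -Real.sinh x / (2 * Real.cosh x * Real.sqrt (Real.cosh x)) else d3 R x
def d1 (R x : ℝ) : ℝ := if R ≤ x then -Real.sqrt (sR R) else d2 R x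
/-- right-continuous piecewise derivative of `fP`. -/
def fD (R x : ℝ) : ℝ := if R + 1 ≤ x then 0 else d1 R x

variable {R : ℝ}

lemma sR_pos : 0 < sR R := inv_pos.2 (Real.cosh_pos R)

lemma sR_le_one : sR R ≤ 1 := by
  rw [sR, inv_le_one_iff₀]; right; exact Real.one_le_cosh R

lemma sqrt_sR_le_one : Real.sqrt (sR R) ≤ 1 := by
  rw [show (1:ℝ) = Real.sqrt 1 by simp]
  exact Real.sqrt_le_sqrt sR_le_one

lemma sqrt_cosh_inv : Real.sqrt ((Real.cosh R)⁻¹) = Real.sqrt (sR R) := rfl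

lemma fP_cont (hR : 0 < R) : Continuous (fP R) := by
  have hco : Continuous fun x : ℝ => Real.sqrt ((Real.cosh x)⁻¹) :=
    (Real.continuous_cosh.inv₀ (fun x => (Real.cosh_pos x).ne')).sqrt
  have h3 : Continuous (f3 R) := by
    apply Continuous.if_le (continuous_const.mul (continuous_id.add continuous_const))
      continuous_const continuous_const continuous_id
    intro x hx; simp only [id_eq] at hx; subst hx; simp only [Pi.mul_apply, Pi.add_apply, id_eq]; ring
  have h2 : Continuous (f2 R) := by
    apply Continuous.if_le hco h3 continuous_const continuous_id
    intro x hx; simp only [id_eq] at hx; subst hx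
    rw [f3, if_pos (by linarith), Real.cosh_neg]
    rw [sqrt_cosh_inv]; ring
  have h1 : Continuous (f1 R) := by
    apply Continuous.if_le (continuous_const.mul (continuous_const.sub continuous_id))
      h2 continuous_const continuous_id
    intro x hx; simp only [id_eq] at hx; subst hx
    rw [f2, if_pos (by linarith), sqrt_cosh_inv]; simp only [Pi.mul_apply, Pi.sub_apply, id_eq]; ring
  apply Continuous.if_le continuous_const h1 continuous_const continuous_id
  intro x hx; simp only [id_eq] at hx; subst hx
  rw [f1, if_pos (by linarith)]; ring


-- branch value lemmas
lemma fP_zero_left (hR : 0 < R) {y : ℝ} (h : y < -(R+1)) : fP R y = 0 := by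
  rw [fP, if_neg (by linarith), f1, if_neg (by linarith), f2, if_neg (by linarith),
    f3, if_neg (by linarith)]

lemma fP_lin1 (hR : 0 < R) {y : ℝ} (h1 : -(R+1) ≤ y) (h2 : y < -R) :
    fP R y = Real.sqrt (sR R) * (y + (R + 1)) := by
  rw [fP, if_neg (by linarith), f1, if_neg (by linarith), f2, if_neg (by linarith),
    f3, if_pos h1]

lemma fP_core {y : ℝ} (h1 : -R ≤ y) (h2 : y < R) :
    fP R y = Real.sqrt ((Real.cosh y)⁻¹) := by
  rw [fP, if_neg (by linarith), f1, if_neg (by linarith), f2, if_pos h1]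

lemma fP_lin2 (hR : 0 < R) {y : ℝ} (h1 : R ≤ y) (h2 : y < R + 1) :
    fP R y = Real.sqrt (sR R) * ((R + 1) - y) := by
  rw [fP, if_neg (by linarith), f1, if_pos h1]

lemma fP_zero_right {y : ℝ} (h : R + 1 ≤ y) : fP R y = 0 := by
  rw [fP, if_pos h]

lemma fD_zero_left (hR : 0 < R) {y : ℝ} (h : y < -(R+1)) : fD R y = 0 := by
  rw [fD, if_neg (by linarith), d1, if_neg (by linarith), d2, if_neg (by linarith),
    d3, if_neg (by linarith)]

lemma fD_lin1 (hR : 0 < R) {y : ℝ} (h1 : -(R+1) ≤ y) (h2 : y < -R) :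
    fD R y = Real.sqrt (sR R) := by
  rw [fD, if_neg (by linarith), d1, if_neg (by linarith), d2, if_neg (by linarith),
    d3, if_pos h1]

lemma fD_core {y : ℝ} (h1 : -R ≤ y) (h2 : y < R) :
    fD R y = -Real.sinh y / (2 * Real.cosh y * Real.sqrt (Real.cosh y)) := by
  rw [fD, if_neg (by linarith), d1, if_neg (by linarith), d2, if_pos h1]

lemma fD_lin2 (hR : 0 < R) {y : ℝ} (h1 : R ≤ y) (h2 : y < R + 1) :
    fD R y = -Real.sqrt (sR R) := by
  rw [fD, if_neg (by linarith), d1, if_pos h1]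

lemma fD_zero_right {y : ℝ} (h : R + 1 ≤ y) : fD R y = 0 := by
  rw [fD, if_pos h]

/-- derivative of the core `sech^{1/2}`. -/
lemma core_hasDerivAt (x : ℝ) :
    HasDerivAt (fun y => Real.sqrt ((Real.cosh y)⁻¹))
      (-Real.sinh x / (2 * Real.cosh x * Real.sqrt (Real.cosh x))) x := by
  have hc : 0 < Real.cosh x := Real.cosh_pos x
  have h1 : HasDerivAt (fun y => (Real.cosh y)⁻¹)
      (-Real.sinh x / Real.cosh x ^ 2) x := (Real.hasDerivAt_cosh x).inv hc.ne'
  have h2 := h1.sqrt (by positivity)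
  convert h2 using 1
  have hs : Real.sqrt (Real.cosh x) > 0 := Real.sqrt_pos.2 hc
  have hss : Real.sqrt (Real.cosh x) * Real.sqrt (Real.cosh x) = Real.cosh x :=
    Real.mul_self_sqrt hc.le
  rw [Real.sqrt_inv]
  field_simp
  linear_combination (Real.sinh x) *
    (Real.sq_sqrt hc.le : Real.sqrt (Real.cosh x) ^ 2 = Real.cosh x)

/-- helper for one-sided derivative via local model -/
lemma hdwa_of_model {f g : ℝ → ℝ} {d x t : ℝ} (hxt : x < t)
    (hg : HasDerivAt g d x) (heq : ∀ y ∈ Ioo x t, f y = g y) (hx : f x = g x) :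
    HasDerivWithinAt f d (Ioi x) x := by
  apply (hg.hasDerivWithinAt (s := Ioi x)).congr_of_eventuallyEq _ hx
  filter_upwards [Ioo_mem_nhdsGT_of_mem (Set.mem_Ico.2 ⟨le_refl x, hxt⟩)] with y hy
  exact heq y hy

lemma fP_hasDerivWithinAt (hR : 0 < R) (x : ℝ) :
    HasDerivWithinAt (fP R) (fD R x) (Ioi x) x := by
  rcases lt_or_ge x (-(R+1)) with h1 | h1
  · rw [fD_zero_left hR h1]
    exact hdwa_of_model h1 (hasDerivAt_const x 0)
      (fun y hy => fP_zero_left hR hy.2) (fP_zero_left hR h1)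
  rcases lt_or_ge x (-R) with h2 | h2
  · rw [fD_lin1 hR h1 h2]
    have hg : HasDerivAt (fun y => Real.sqrt (sR R) * (y + (R + 1)))
        (Real.sqrt (sR R)) x := by
      simpa using ((hasDerivAt_id x).add_const (R+1)).const_mul (Real.sqrt (sR R))
    exact hdwa_of_model h2 hg
      (fun y hy => fP_lin1 hR (by linarith [hy.1]) hy.2) (fP_lin1 hR h1 h2)
  rcases lt_or_ge x R with h3 | h3
  · rw [fD_core h2 h3]
    exact hdwa_of_model h3 (core_hasDerivAt x)
      (fun y hy => fP_core (by linarith [hy.1]) hy.2) (fP_core h2 h3)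
  rcases lt_or_ge x (R+1) with h4 | h4
  · rw [fD_lin2 hR h3 h4]
    have hg : HasDerivAt (fun y => Real.sqrt (sR R) * ((R + 1) - y))
        (-Real.sqrt (sR R)) x := by
      have := ((hasDerivAt_id x).const_sub (R+1)).const_mul (Real.sqrt (sR R))
      simpa using this
    exact hdwa_of_model h4 hg
      (fun y hy => fP_lin2 hR (by linarith [hy.1]) hy.2) (fP_lin2 hR h3 h4)
  · rw [fD_zero_right h4]
    apply (hasDerivAt_const x (0:ℝ)).hasDerivWithinAt.congr_of_eventuallyEq _
      (fP_zero_right h4)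
    filter_upwards [self_mem_nhdsWithin] with y hy
    exact fP_zero_right (by
      have : x < y := hy
      linarith)

lemma fD_meas : Measurable (fD R) := by
  have hm : ∀ c : ℝ, MeasurableSet {x : ℝ | c ≤ x} :=
    fun c => measurableSet_le measurable_const measurable_id
  have h3 : Measurable (d3 R) := Measurable.ite (hm _) measurable_const measurable_const
  have hcore : Measurable fun x : ℝ =>
      -Real.sinh x / (2 * Real.cosh x * Real.sqrt (Real.cosh x)) := by
    apply Measurable.div
    · exact Real.continuous_sinh.measurable.neg
    · exact ((continuous_const.mul Real.continuous_cosh).mul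
        Real.continuous_cosh.sqrt).measurable
  have h2 : Measurable (d2 R) := Measurable.ite (hm _) hcore h3
  have h1 : Measurable (d1 R) := Measurable.ite (hm _) measurable_const h2
  exact Measurable.ite (hm _) measurable_const h1

lemma sR_pos' : 0 < sR R := inv_pos.2 (Real.cosh_pos R)
lemma sR_le_one' : sR R ≤ 1 := by
  rw [sR, inv_le_one_iff₀]; right; exact Real.one_le_cosh R
lemma sqrt_sR_le_one' : Real.sqrt (sR R) ≤ 1 := by
  rw [show (1:ℝ) = Real.sqrt 1 by simp]
  exact Real.sqrt_le_sqrt sR_le_one'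

lemma core_abs_le (x : ℝ) :
    |(-Real.sinh x / (2 * Real.cosh x * Real.sqrt (Real.cosh x)))| ≤ 1 := by
  have hc : 0 < Real.cosh x := Real.cosh_pos x
  have hc1 : 1 ≤ Real.cosh x := Real.one_le_cosh x
  have hs1 : 1 ≤ Real.sqrt (Real.cosh x) := by
    rw [show (1:ℝ) = Real.sqrt 1 by simp]
    exact Real.sqrt_le_sqrt hc1
  have hsa : |Real.sinh x| ≤ Real.cosh x := by
    rw [abs_le]
    constructor
    · have := Real.sinh_lt_cosh (x := -x)
      rw [Real.sinh_neg, Real.cosh_neg] at this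
      linarith
    · exact (Real.sinh_lt_cosh x).le
  rw [abs_div, abs_neg]
  rw [div_le_one (by positivity)]
  have : |2 * Real.cosh x * Real.sqrt (Real.cosh x)| =
      2 * Real.cosh x * Real.sqrt (Real.cosh x) := abs_of_pos (by positivity)
  rw [this]
  nlinarith

lemma fD_abs_le (hR : 0 < R) (x : ℝ) : |fD R x| ≤ 1 := by
  have hsle : |Real.sqrt (sR R)| ≤ 1 := by
    rw [abs_of_nonneg (Real.sqrt_nonneg _)]; exact sqrt_sR_le_one'
  rcases lt_or_ge x (-(R+1)) with h1 | h1
  · rw [fD_zero_left hR h1]; simp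
  rcases lt_or_ge x (-R) with h2 | h2
  · rw [fD_lin1 hR h1 h2]; exact hsle
  rcases lt_or_ge x R with h3 | h3
  · rw [fD_core h2 h3]; exact core_abs_le x
  rcases lt_or_ge x (R+1) with h4 | h4
  · rw [fD_lin2 hR h3 h4, abs_neg]; exact hsle
  · rw [fD_zero_right h4]; simp

lemma fP_abs_le (hR : 0 < R) (x : ℝ) : |fP R x| ≤ 1 := by
  have hs0 : (0:ℝ) ≤ Real.sqrt (sR R) := Real.sqrt_nonneg _
  rcases lt_or_ge x (-(R+1)) with h1 | h1
  · rw [fP_zero_left hR h1]; simp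
  rcases lt_or_ge x (-R) with h2 | h2
  · rw [fP_lin1 hR h1 h2, abs_of_nonneg (by nlinarith)]
    nlinarith [sqrt_sR_le_one' (R := R)]
  rcases lt_or_ge x R with h3 | h3
  · rw [fP_core h2 h3, abs_of_nonneg (Real.sqrt_nonneg _)]
    rw [show (1:ℝ) = Real.sqrt 1 by simp]
    apply Real.sqrt_le_sqrt
    rw [inv_le_one_iff₀]; right; exact Real.one_le_cosh x
  rcases lt_or_ge x (R+1) with h4 | h4
  · rw [fP_lin2 hR h3 h4, abs_of_nonneg (by nlinarith)]
    nlinarith [sqrt_sR_le_one' (R := R)]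
  · rw [fP_zero_right h4]; simp

lemma fD_intervalIntegrable (hR : 0 < R) (y z : ℝ) :
    IntervalIntegrable (fD R) volume y z := by
  rw [intervalIntegrable_iff]
  apply Integrable.mono' (g := fun _ => (1:ℝ))
  · exact integrableOn_const measure_Ioc_lt_top.ne
  · exact fD_meas.aestronglyMeasurable
  · filter_upwards with a
    rw [Real.norm_eq_abs]
    exact fD_abs_le hR a

lemma fP_FTC (hR : 0 < R) (y z : ℝ) :
    ∫ t in y..z, fD R t = fP R z - fP R y := by
  rcases le_total y z with h | h
  · exact intervalIntegral.integral_eq_sub_of_hasDeriv_right_of_le h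
      ((fP_cont hR).continuousOn) (fun x _ => fP_hasDerivWithinAt hR x)
      (fD_intervalIntegrable hR y z)
  · rw [intervalIntegral.integral_symm]
    rw [intervalIntegral.integral_eq_sub_of_hasDeriv_right_of_le h
      ((fP_cont hR).continuousOn) (fun x _ => fP_hasDerivWithinAt hR x)
      (fD_intervalIntegrable hR z y)]
    ring



-- closed-endpoint versions for fP (continuity of values)
lemma fP_lin1' (hR : 0 < R) {y : ℝ} (h1 : -(R+1) ≤ y) (h2 : y ≤ -R) :
    fP R y = Real.sqrt (sR R) * (y + (R + 1)) := by
  rcases lt_or_eq_of_le h2 with h | h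
  · exact fP_lin1 hR h1 h
  · subst h
    rw [fP_core le_rfl (by linarith), Real.cosh_neg]
    rw [show -R + (R + 1) = (1:ℝ) by ring, mul_one]
    rfl
lemma fP_core' {y : ℝ} (hR : 0 < R) (h1 : -R ≤ y) (h2 : y ≤ R) :
    fP R y = Real.sqrt ((Real.cosh y)⁻¹) := by
  rcases lt_or_eq_of_le h2 with h | h
  · exact fP_core h1 h
  · rw [h, fP_lin2 hR le_rfl (by linarith), show R + 1 - R = (1:ℝ) by ring, mul_one]
    rfl
lemma fP_lin2' (hR : 0 < R) {y : ℝ} (h1 : R ≤ y) (h2 : y ≤ R + 1) :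
    fP R y = Real.sqrt (sR R) * ((R + 1) - y) := by
  rcases lt_or_eq_of_le h2 with h | h
  · exact fP_lin2 hR h1 h
  · subst h
    rw [fP_zero_right le_rfl]; ring

lemma ae_ne (c : ℝ) : ∀ᵐ x : ℝ, x ≠ c := by
  rw [ae_iff]
  have : {x : ℝ | ¬x ≠ c} = {c} := by ext y; simp
  rw [this]
  exact Real.volume_singleton

-- antiderivatives
lemma A1 (x : ℝ) : HasDerivAt (fun y => Real.arctan (Real.sinh y)) ((Real.cosh x)⁻¹) x := by
  have h := (Real.hasDerivAt_arctan (Real.sinh x)).comp x (Real.hasDerivAt_sinh x)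
  refine h.congr_deriv ?_
  have hc := Real.cosh_pos x
  have h2 : 1 + Real.sinh x ^ 2 = Real.cosh x ^ 2 := by rw [Real.cosh_sq]; ring
  rw [h2]
  field_simp

lemma A2 (x : ℝ) : HasDerivAt
    (fun y => (1/2) * (Real.sinh y / Real.cosh y ^ 2 + Real.arctan (Real.sinh y)))
    (((Real.cosh x)⁻¹) ^ 3) x := by
  have hc := Real.cosh_pos x
  have h1 : HasDerivAt (fun y => Real.sinh y / Real.cosh y ^ 2)
      ((Real.cosh x * Real.cosh x ^ 2 - Real.sinh x * (2 * Real.cosh x * Real.sinh x)) /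
        (Real.cosh x ^ 2) ^ 2) x := by
    exact (Real.hasDerivAt_sinh x).div
      (((Real.hasDerivAt_cosh x).pow 2).congr_deriv (by ring)) (by positivity)
  have h := (h1.add (A1 x)).const_mul (1/2 : ℝ)
  refine h.congr_deriv ?_
  have hs := Real.cosh_sq x
  field_simp
  ring_nf
  linear_combination 2 * hs

lemma A3 (x : ℝ) : HasDerivAt
    (fun y => (1/8) * (Real.arctan (Real.sinh y) - Real.sinh y / Real.cosh y ^ 2))
    (Real.sinh x ^ 2 / (4 * Real.cosh x ^ 3)) x := by
  have hc := Real.cosh_pos x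
  have h1 : HasDerivAt (fun y => Real.sinh y / Real.cosh y ^ 2)
      ((Real.cosh x * Real.cosh x ^ 2 - Real.sinh x * (2 * Real.cosh x * Real.sinh x)) /
        (Real.cosh x ^ 2) ^ 2) x := by
    exact (Real.hasDerivAt_sinh x).div
      (((Real.hasDerivAt_cosh x).pow 2).congr_deriv (by ring)) (by positivity)
  have h := ((A1 x).sub h1).const_mul (1/8 : ℝ)
  refine h.congr_deriv ?_
  have hs := Real.cosh_sq x
  field_simp
  ring_nf

-- core interval integrals
lemma core_m (hR : 0 < R) : ∫ x in (-R)..R, (Real.cosh x)⁻¹ = 2 * Real.arctan (Real.sinh R) := by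
  rw [intervalIntegral.integral_eq_sub_of_hasDerivAt (fun x _ => A1 x)
    ((Real.continuous_cosh.inv₀ fun x => (Real.cosh_pos x).ne').continuousOn.intervalIntegrable)]
  rw [Real.sinh_neg, Real.arctan_neg]
  ring

lemma core_p (hR : 0 < R) : ∫ x in (-R)..R, ((Real.cosh x)⁻¹) ^ 3
    = Real.sinh R / Real.cosh R ^ 2 + Real.arctan (Real.sinh R) := by
  rw [intervalIntegral.integral_eq_sub_of_hasDerivAt (fun x _ => A2 x)
    (((Real.continuous_cosh.inv₀ fun x => (Real.cosh_pos x).ne').pow 3).continuousOn.intervalIntegrable)]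
  rw [Real.sinh_neg, Real.arctan_neg, Real.cosh_neg]
  ring

lemma core_k (hR : 0 < R) : ∫ x in (-R)..R, Real.sinh x ^ 2 / (4 * Real.cosh x ^ 3)
    = (Real.arctan (Real.sinh R) - Real.sinh R / Real.cosh R ^ 2) / 4 := by
  rw [intervalIntegral.integral_eq_sub_of_hasDerivAt (fun x _ => A3 x)]
  · rw [Real.sinh_neg, Real.arctan_neg, Real.cosh_neg]
    ring
  · apply ContinuousOn.intervalIntegrable
    apply Continuous.continuousOn
    apply Continuous.div
    · exact Real.continuous_sinh.pow 2
    · exact continuous_const.mul (Real.continuous_cosh.pow 3)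
    · intro x
      have := Real.cosh_pos x
      positivity

-- generic support lemma
lemma integral_of_support {b : ℝ} (hb : 0 ≤ b) {Q : ℝ → ℝ}
    (h : ∀ y : ℝ, y ∉ Icc (-b) b → Q y = 0) :
    ∫ x : ℝ, Q x = ∫ x in (-b)..b, Q x := by
  have hQ : Q = (Icc (-b) b).indicator Q := by
    funext y
    by_cases hy : y ∈ Icc (-b) b
    · rw [indicator_of_mem hy]
    · rw [indicator_of_notMem hy, h y hy]
  conv_lhs => rw [hQ]
  rw [integral_indicator measurableSet_Icc, integral_Icc_eq_integral_Ioc,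
    ← intervalIntegral.integral_of_le (by linarith)]


-- tail polynomial integrals
lemma tail_sq_left (hR : 0 < R) :
    ∫ x in (-(R+1))..(-R), sR R * (x + (R+1)) ^ 2 = sR R / 3 := by
  rw [intervalIntegral.integral_const_mul,
    intervalIntegral.integral_comp_add_right (fun x => x ^ 2) (R+1)]
  rw [integral_pow]
  ring

lemma tail_six_left (hR : 0 < R) :
    ∫ x in (-(R+1))..(-R), sR R ^ 3 * (x + (R+1)) ^ 6 = sR R ^ 3 / 7 := by
  rw [intervalIntegral.integral_const_mul,
    intervalIntegral.integral_comp_add_right (fun x => x ^ 6) (R+1)]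
  rw [integral_pow]
  ring

lemma tail_sq_right (hR : 0 < R) :
    ∫ x in R..(R+1), sR R * ((R+1) - x) ^ 2 = sR R / 3 := by
  have : ∀ x : ℝ, sR R * ((R+1) - x) ^ 2 = sR R * (x + -(R+1)) ^ 2 := by intro x; ring
  simp_rw [this]
  rw [intervalIntegral.integral_const_mul,
    intervalIntegral.integral_comp_add_right (fun x => x ^ 2) (-(R+1))]
  rw [integral_pow]
  ring

lemma tail_six_right (hR : 0 < R) :
    ∫ x in R..(R+1), sR R ^ 3 * ((R+1) - x) ^ 6 = sR R ^ 3 / 7 := by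
  have : ∀ x : ℝ, sR R ^ 3 * ((R+1) - x) ^ 6 = sR R ^ 3 * (x + -(R+1)) ^ 6 := by intro x; ring
  simp_rw [this]
  rw [intervalIntegral.integral_const_mul,
    intervalIntegral.integral_comp_add_right (fun x => x ^ 6) (-(R+1))]
  rw [integral_pow]
  ring

-- sqrt simplifications
lemma sq_fP_lin (a x : ℝ) (ha : 0 ≤ a) : (Real.sqrt a * x) ^ 2 = a * x ^ 2 := by
  rw [mul_pow, Real.sq_sqrt ha]
lemma six_fP_lin (a x : ℝ) (ha : 0 ≤ a) : (Real.sqrt a * x) ^ 6 = a ^ 3 * x ^ 6 := by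
  rw [mul_pow, show (6:ℕ) = 2*3 by norm_num, pow_mul, Real.sq_sqrt ha]
lemma sq_core (x : ℝ) : Real.sqrt ((Real.cosh x)⁻¹) ^ 2 = (Real.cosh x)⁻¹ :=
  Real.sq_sqrt (by positivity)
lemma six_core (x : ℝ) : Real.sqrt ((Real.cosh x)⁻¹) ^ 6 = ((Real.cosh x)⁻¹) ^ 3 := by
  rw [show (6:ℕ) = 2*3 by norm_num, pow_mul, sq_core]
lemma sq_coreD (x : ℝ) :
    (-Real.sinh x / (2 * Real.cosh x * Real.sqrt (Real.cosh x))) ^ 2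
      = Real.sinh x ^ 2 / (4 * Real.cosh x ^ 3) := by
  have hc := Real.cosh_pos x
  rw [div_pow]
  congr 1
  · ring
  · rw [mul_pow, mul_pow, Real.sq_sqrt hc.le]; ring

-- integrability of pieces
lemma fP_sq_ii (hR : 0 < R) (y z : ℝ) :
    IntervalIntegrable (fun x => fP R x ^ 2) volume y z :=
  (((fP_cont hR).pow 2).continuousOn).intervalIntegrable
lemma fP_six_ii (hR : 0 < R) (y z : ℝ) :
    IntervalIntegrable (fun x => fP R x ^ 6) volume y z :=
  (((fP_cont hR).pow 6).continuousOn).intervalIntegrable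
lemma fD_sq_ii (hR : 0 < R) (y z : ℝ) :
    IntervalIntegrable (fun x => fD R x ^ 2) volume y z := by
  rw [intervalIntegrable_iff]
  apply Integrable.mono' (g := fun _ => (1:ℝ))
  · exact integrableOn_const measure_Ioc_lt_top.ne
  · exact (fD_meas.pow_const 2).aestronglyMeasurable
  · filter_upwards with a
    rw [Real.norm_eq_abs, abs_pow]
    have h := fD_abs_le hR a
    nlinarith [abs_nonneg (fD R a)]

-- the three full-line integrals
lemma Im (hR : 0 < R) :
    ∫ x : ℝ, fP R x ^ 2 = 2 * Real.arctan (Real.sinh R) + 2/3 * sR R := by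
  have hs := (sR_pos (R := R)).le
  rw [integral_of_support (b := R+1) (by linarith)
      (fun y hy => by
        rw [mem_Icc, not_and_or] at hy
        rcases hy with hy | hy
        · push_neg at hy
          rw [fP_zero_left hR hy, zero_pow]; norm_num
        · push_neg at hy
          rw [fP_zero_right hy.le, zero_pow]; norm_num)]
  rw [← intervalIntegral.integral_add_adjacent_intervals (b := -R)
      (fP_sq_ii hR _ _) (fP_sq_ii hR _ _),
    ← intervalIntegral.integral_add_adjacent_intervals (a := -R) (b := R)
      (fP_sq_ii hR _ _) (fP_sq_ii hR _ _)]
  have e1 : ∫ x in (-(R+1))..(-R), fP R x ^ 2 = sR R / 3 := by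
    rw [intervalIntegral.integral_congr (g := fun x => sR R * (x + (R+1)) ^ 2)]
    · exact tail_sq_left hR
    · intro y hy
      rw [uIcc_of_le (by linarith)] at hy
      dsimp only
      rw [fP_lin1' hR hy.1 hy.2, sq_fP_lin _ _ hs]
  have e2 : ∫ x in (-R)..R, fP R x ^ 2 = 2 * Real.arctan (Real.sinh R) := by
    rw [intervalIntegral.integral_congr (g := fun x => (Real.cosh x)⁻¹)]
    · exact core_m hR
    · intro y hy
      rw [uIcc_of_le (by linarith)] at hy
      dsimp only
      rw [fP_core' hR hy.1 hy.2, sq_core]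
  have e3 : ∫ x in R..(R+1), fP R x ^ 2 = sR R / 3 := by
    rw [intervalIntegral.integral_congr (g := fun x => sR R * ((R+1) - x) ^ 2)]
    · exact tail_sq_right hR
    · intro y hy
      rw [uIcc_of_le (by linarith)] at hy
      dsimp only
      rw [fP_lin2' hR hy.1 hy.2, sq_fP_lin _ _ hs]
  rw [e1, e2, e3]; ring

lemma Ip (hR : 0 < R) :
    ∫ x : ℝ, fP R x ^ 6 = Real.arctan (Real.sinh R) + Real.sinh R / Real.cosh R ^ 2
      + 2/7 * sR R ^ 3 := by
  have hs := (sR_pos (R := R)).le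
  rw [integral_of_support (b := R+1) (by linarith)
      (fun y hy => by
        rw [mem_Icc, not_and_or] at hy
        rcases hy with hy | hy
        · push_neg at hy
          rw [fP_zero_left hR hy, zero_pow]; norm_num
        · push_neg at hy
          rw [fP_zero_right hy.le, zero_pow]; norm_num)]
  rw [← intervalIntegral.integral_add_adjacent_intervals (b := -R)
      (fP_six_ii hR _ _) (fP_six_ii hR _ _),
    ← intervalIntegral.integral_add_adjacent_intervals (a := -R) (b := R)
      (fP_six_ii hR _ _) (fP_six_ii hR _ _)]
  have e1 : ∫ x in (-(R+1))..(-R), fP R x ^ 6 = sR R ^ 3 / 7 := by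
    rw [intervalIntegral.integral_congr (g := fun x => sR R ^ 3 * (x + (R+1)) ^ 6)]
    · exact tail_six_left hR
    · intro y hy
      rw [uIcc_of_le (by linarith)] at hy
      dsimp only
      rw [fP_lin1' hR hy.1 hy.2, six_fP_lin _ _ hs]
  have e2 : ∫ x in (-R)..R, fP R x ^ 6
      = Real.sinh R / Real.cosh R ^ 2 + Real.arctan (Real.sinh R) := by
    rw [intervalIntegral.integral_congr (g := fun x => ((Real.cosh x)⁻¹) ^ 3)]
    · exact core_p hR
    · intro y hy
      rw [uIcc_of_le (by linarith)] at hy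
      dsimp only
      rw [fP_core' hR hy.1 hy.2, six_core]
  have e3 : ∫ x in R..(R+1), fP R x ^ 6 = sR R ^ 3 / 7 := by
    rw [intervalIntegral.integral_congr (g := fun x => sR R ^ 3 * ((R+1) - x) ^ 6)]
    · exact tail_six_right hR
    · intro y hy
      rw [uIcc_of_le (by linarith)] at hy
      dsimp only
      rw [fP_lin2' hR hy.1 hy.2, six_fP_lin _ _ hs]
  rw [e1, e2, e3]; ring

lemma Ik (hR : 0 < R) :
    ∫ x : ℝ, fD R x ^ 2
      = (Real.arctan (Real.sinh R) - Real.sinh R / Real.cosh R ^ 2) / 4 + 2 * sR R := by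
  have hs := (sR_pos (R := R)).le
  rw [integral_of_support (b := R+1) (by linarith)
      (fun y hy => by
        rw [mem_Icc, not_and_or] at hy
        rcases hy with hy | hy
        · push_neg at hy
          rw [fD_zero_left hR hy, zero_pow]; norm_num
        · push_neg at hy
          rw [fD_zero_right hy.le, zero_pow]; norm_num)]
  rw [← intervalIntegral.integral_add_adjacent_intervals (b := -R)
      (fD_sq_ii hR _ _) (fD_sq_ii hR _ _),
    ← intervalIntegral.integral_add_adjacent_intervals (a := -R) (b := R)
      (fD_sq_ii hR _ _) (fD_sq_ii hR _ _)]
  have e1 : ∫ x in (-(R+1))..(-R), fD R x ^ 2 = sR R := by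
    rw [intervalIntegral.integral_congr_ae (g := fun _ => sR R)]
    · rw [intervalIntegral.integral_const, smul_eq_mul]
      ring_nf
    · filter_upwards [ae_ne (-R)] with x hne hx
      rw [uIoc_of_le (by linarith), mem_Ioc] at hx
      rw [fD_lin1 hR (by linarith [hx.1]) (lt_of_le_of_ne hx.2 hne),
        Real.sq_sqrt hs]
  have e2 : ∫ x in (-R)..R, fD R x ^ 2
      = (Real.arctan (Real.sinh R) - Real.sinh R / Real.cosh R ^ 2) / 4 := by
    rw [intervalIntegral.integral_congr_ae
        (g := fun x => Real.sinh x ^ 2 / (4 * Real.cosh x ^ 3))]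
    · exact core_k hR
    · filter_upwards [ae_ne R] with x hne hx
      rw [uIoc_of_le (by linarith), mem_Ioc] at hx
      rw [fD_core hx.1.le (lt_of_le_of_ne hx.2 hne), sq_coreD]
  have e3 : ∫ x in R..(R+1), fD R x ^ 2 = sR R := by
    rw [intervalIntegral.integral_congr_ae (g := fun _ => sR R)]
    · rw [intervalIntegral.integral_const, smul_eq_mul]
      ring_nf
    · filter_upwards [ae_ne (R+1)] with x hne hx
      rw [uIoc_of_le (by linarith), mem_Ioc] at hx
      rw [fD_lin2 hR hx.1.le (lt_of_le_of_ne hx.2 hne), neg_pow, Real.sq_sqrt hs]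
      norm_num
  rw [e1, e2, e3]; ring


def mF (R : ℝ) : ℝ := 2 * Real.arctan (Real.sinh R) + 2/3 * sR R
def kF (R : ℝ) : ℝ :=
  (Real.arctan (Real.sinh R) - Real.sinh R / Real.cosh R ^ 2) / 4 + 2 * sR R
def pF (R : ℝ) : ℝ :=
  Real.arctan (Real.sinh R) + Real.sinh R / Real.cosh R ^ 2 + 2/7 * sR R ^ 3

lemma Im' (hR : 0 < R) : ∫ x : ℝ, fP R x ^ 2 = mF R := by rw [Im hR]; rfl
lemma Ik' (hR : 0 < R) : ∫ x : ℝ, fD R x ^ 2 = kF R := by rw [Ik hR]; rfl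
lemma Ip' (hR : 0 < R) : ∫ x : ℝ, fP R x ^ 6 = pF R := by rw [Ip hR]; rfl

lemma sinh_tendsto : Tendsto Real.sinh atTop atTop := by
  apply tendsto_atTop_mono' atTop
    (show ∀ᶠ x : ℝ in atTop, (Real.exp x - 1) / 2 ≤ Real.sinh x from ?_) ?_
  · filter_upwards [eventually_ge_atTop (0:ℝ)] with x hx
    rw [Real.sinh_eq]
    have : Real.exp (-x) ≤ 1 := Real.exp_le_one_iff.2 (by linarith)
    linarith
  · exact (tendsto_atTop_add_const_right atTop (-1) Real.tendsto_exp_atTop).atTop_div_const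
      (by norm_num)

lemma cosh_tendsto : Tendsto Real.cosh atTop atTop :=
  tendsto_atTop_mono (fun x => (Real.sinh_lt_cosh x).le) sinh_tendsto

lemma arctan_sinh_tendsto :
    Tendsto (fun R => Real.arctan (Real.sinh R)) atTop (𝓝 (π/2)) :=
  (Real.tendsto_arctan_atTop.mono_right nhdsWithin_le_nhds).comp sinh_tendsto

lemma sR_tendsto : Tendsto sR atTop (𝓝 0) := tendsto_inv_atTop_zero.comp cosh_tendsto

lemma sc_tendsto : Tendsto (fun R => Real.sinh R / Real.cosh R ^ 2) atTop (𝓝 0) := by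
  refine squeeze_zero' ?_ ?_ sR_tendsto
  · filter_upwards [eventually_ge_atTop (0:ℝ)] with x hx
    have := Real.cosh_pos x
    positivity
  · filter_upwards with x
    have hc := Real.cosh_pos x
    unfold sR
    rw [div_le_iff₀ (by positivity), inv_mul_eq_div, le_div_iff₀ hc]
    nlinarith [(Real.sinh_lt_cosh x).le, Real.cosh_pos x]

lemma exists_R (μ : ℝ) (hμ : π * Real.sqrt 3 / 2 < μ) :
    ∃ R : ℝ, 0 < R ∧ 0 < mF R ∧ 3 * kF R * mF R ^ 2 < μ ^ 2 * pF R := by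
  have hμ0 : 0 < μ := lt_trans (by positivity) hμ
  have hμsq : 3 * π ^ 2 / 4 < μ ^ 2 := by
    have h0 : 0 ≤ π * Real.sqrt 3 / 2 := by positivity
    have := mul_self_lt_mul_self h0 hμ
    have h3 : Real.sqrt 3 * Real.sqrt 3 = 3 := Real.mul_self_sqrt (by norm_num)
    nlinarith [this, h3]
  have hmf : Tendsto mF atTop (𝓝 π) := by
    have h := (arctan_sinh_tendsto.const_mul 2).add (sR_tendsto.const_mul (2/3))
    have h2 := h.congr (fun x => by show _ = mF x; unfold mF; ring)
    have e : 2 * (π/2) + 2/3 * 0 = π := by ring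
    rwa [e] at h2
  have hkf : Tendsto kF atTop (𝓝 (π/8)) := by
    have h := ((arctan_sinh_tendsto.sub sc_tendsto).div_const 4).add
      (sR_tendsto.const_mul 2)
    have h2 := h.congr (fun x => by show _ = kF x; unfold kF; ring)
    have e : (π/2 - 0)/4 + 2*0 = π/8 := by ring
    rwa [e] at h2
  have hpf : Tendsto pF atTop (𝓝 (π/2)) := by
    have hcube : Tendsto (fun R => sR R ^ 3) atTop (𝓝 0) := by
      have := sR_tendsto.pow 3
      simpa using this
    have h := (arctan_sinh_tendsto.add sc_tendsto).add (hcube.const_mul (2/7))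
    have h2 := h.congr (fun x => by show _ = pF x; unfold pF; ring)
    have e : π/2 + 0 + 2/7*0 = π/2 := by ring
    rwa [e] at h2
  have hD : Tendsto (fun R => μ ^ 2 * pF R - 3 * kF R * mF R ^ 2) atTop
      (𝓝 (μ ^ 2 * (π/2) - 3 * (π/8) * π ^ 2)) := by
    exact (hpf.const_mul _).sub ((hkf.const_mul 3).mul (hmf.pow 2))
  have hpos : 0 < μ ^ 2 * (π/2) - 3 * (π/8) * π ^ 2 := by nlinarith [pi_pos]
  have hev : ∀ᶠ R in atTop, 0 < μ ^ 2 * pF R - 3 * kF R * mF R ^ 2 :=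
    hD.eventually (eventually_gt_nhds hpos)
  have hev2 : ∀ᶠ R in atTop, (1:ℝ) ≤ R := eventually_ge_atTop 1
  obtain ⟨R, hR1, hRpos⟩ := (hev2.and hev).exists
  refine ⟨R, by linarith, ?_, by linarith [hRpos]⟩
  have h1 : 0 ≤ Real.arctan (Real.sinh R) := by
    rw [show (0:ℝ) = Real.arctan 0 by rw [Real.arctan_zero]]
    exact Real.arctan_strictMono.monotone (Real.sinh_nonneg_iff.2 (by linarith))
  have h2 : 0 < sR R := inv_pos.2 (Real.cosh_pos R)
  unfold mF; linarith


/-- scaling change of variables on the line -/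
lemma scale_integral (G : ℝ → ℝ) {l : ℝ} (hl : 0 < l) (d : ℝ) :
    ∫ x : ℝ, G (l * x - d) = l⁻¹ * ∫ y : ℝ, G y := by
  have h1 : ∫ x : ℝ, G (l * x - d) = ∫ x : ℝ, (fun y => G (y - d)) (l * x) := rfl
  rw [h1, MeasureTheory.Measure.integral_comp_mul_left (fun y => G (y - d)) l,
    integral_sub_right_eq_self G d, smul_eq_mul, abs_of_pos (inv_pos.2 hl)]

lemma scale_pow (G : ℝ → ℝ) {l : ℝ} (hl : 0 < l) (d : ℝ) (n : ℕ) :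
    ∫ x : ℝ, G (l * x - d) ^ n = l⁻¹ * ∫ y : ℝ, G y ^ n := by
  have h := scale_integral (fun y => G y ^ n) hl d
  simpa using h


end NLSAux

open NLSAux

/-- For every mass `μ > μ_ℝ = π√3/2`, the `L²`-critical NLS energy is unbounded
below among `H¹(ℝ)` functions of mass `μ` supported in `[0,1]`:
the infimum over this class is `-∞`. -/
theorem energy_unbounded_below_supported (μ : ℝ) (hμ : π * Real.sqrt 3 / 2 < μ) :
    ∀ M : ℝ, ∃ u u' : ℝ → ℝ, IsH1Line u u' ∧ (∫ x : ℝ, u x ^ 2) = μ ∧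
      (∀ x : ℝ, x ∉ Icc (0:ℝ) 1 → u x = 0) ∧ energyLine u u' < M := by
  intro M
  have hμ0 : 0 < μ := lt_trans (by positivity) hμ
  obtain ⟨R, hR, hm, hkey⟩ := exists_R μ hμ
  set m := mF R with hmdef
  set k := kF R with hkdef
  set p := pF R with hpdef
  -- the scale-invariant energy coefficient
  set E0 : ℝ := μ * k / (2 * m) - μ ^ 3 * p / (6 * m ^ 3) with hE0def
  have hE0 : E0 < 0 := by
    rw [hE0def, sub_neg, div_lt_div_iff₀ (by positivity) (by positivity)]
    nlinarith [mul_lt_mul_of_pos_left hkey (show (0:ℝ) < 2 * m * μ by positivity)]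
  -- choose the concentration scale
  set l : ℝ := max (2 * (R + 1)) (Real.sqrt ((|M| + 1) / (-E0)) + 1) with hldef
  have hl2b : 2 * (R + 1) ≤ l := le_max_left _ _
  have hl0 : 0 < l := lt_of_lt_of_le (by linarith) hl2b
  have hq0 : 0 ≤ (|M| + 1) / (-E0) := by
    apply div_nonneg (by positivity) (by linarith)
  have hlE : l ^ 2 * E0 < M := by
    have h1 : Real.sqrt ((|M| + 1) / (-E0)) < l :=
      lt_of_lt_of_le (lt_add_one _) (le_max_right _ _)
    have h2 : (|M| + 1) / (-E0) < l ^ 2 := by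
      rw [← Real.sq_sqrt hq0]
      exact pow_lt_pow_left₀ h1 (Real.sqrt_nonneg _) (by norm_num)
    have h3 : l ^ 2 * E0 < ((|M| + 1) / (-E0)) * E0 :=
      mul_lt_mul_of_neg_right h2 hE0
    have h4 : ((|M| + 1) / (-E0)) * E0 = -(|M| + 1) := by
      have h5 : E0 / -E0 = -1 := by rw [div_neg, div_self hE0.ne]
      calc ((|M| + 1) / (-E0)) * E0 = (|M| + 1) * (E0 / -E0) := by ring
        _ = -(|M| + 1) := by rw [h5]; ring
    calc l ^ 2 * E0 < ((|M| + 1) / (-E0)) * E0 := h3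
      _ = -(|M| + 1) := h4
      _ < M := by cases abs_cases M <;> linarith
  -- amplitude
  set c : ℝ := Real.sqrt (l * μ / m) with hcdef
  have hc0 : 0 ≤ c := Real.sqrt_nonneg _
  have hc2 : c ^ 2 = l * μ / m := Real.sq_sqrt (by positivity)
  -- the functions
  set u : ℝ → ℝ := fun x => c * fP R (l * x - (R + 1)) with hudef
  set u' : ℝ → ℝ := fun x => c * l * fD R (l * x - (R + 1)) with hu'def
  have hu0 : u 0 = 0 := by
    show c * fP R (l * 0 - (R + 1)) = 0
    rw [mul_zero, zero_sub, fP_lin1' hR (by linarith) (by linarith)]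
    ring
  -- support
  have hsupp : ∀ x : ℝ, x ∉ Icc (0:ℝ) 1 → u x = 0 := by
    intro x hx
    rw [mem_Icc, not_and_or] at hx
    show c * fP R (l * x - (R + 1)) = 0
    rcases hx with hx | hx
    · push_neg at hx
      rw [fP_zero_left hR (by nlinarith), mul_zero]
    · push_neg at hx
      rw [fP_zero_right (by nlinarith), mul_zero]
  have hsupp' : ∀ x : ℝ, x ∉ Icc (0:ℝ) 1 → u' x = 0 := by
    intro x hx
    rw [mem_Icc, not_and_or] at hx
    show c * l * fD R (l * x - (R + 1)) = 0
    rcases hx with hx | hx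
    · push_neg at hx
      rw [fD_zero_left hR (by nlinarith), mul_zero]
    · push_neg at hx
      rw [fD_zero_right (by nlinarith), mul_zero]
  -- integrals
  have hmass : (∫ x : ℝ, u x ^ 2) = μ := by
    calc ∫ x : ℝ, u x ^ 2
        = ∫ x : ℝ, c ^ 2 * fP R (l * x - (R+1)) ^ 2 := by
          congr 1; funext x; show (c * fP R (l * x - (R+1))) ^ _ = _; ring
      _ = c ^ 2 * ∫ x : ℝ, fP R (l * x - (R+1)) ^ 2 :=
          integral_const_mul _ _
      _ = c ^ 2 * (l⁻¹ * ∫ y : ℝ, fP R y ^ 2) := by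
          rw [scale_pow (fP R) hl0]
      _ = (l * μ / m) * (l⁻¹ * m) := by rw [hc2, Im' hR]
      _ = μ := by field_simp
  have hkin : (∫ x : ℝ, u' x ^ 2) = c ^ 2 * l * k := by
    calc ∫ x : ℝ, u' x ^ 2
        = ∫ x : ℝ, (c*l) ^ 2 * fD R (l * x - (R+1)) ^ 2 := by
          congr 1; funext x; show (c * l * fD R (l * x - (R+1))) ^ _ = _; ring
      _ = (c*l) ^ 2 * ∫ x : ℝ, fD R (l * x - (R+1)) ^ 2 :=
          integral_const_mul _ _
      _ = (c*l) ^ 2 * (l⁻¹ * ∫ y : ℝ, fD R y ^ 2) := by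
          rw [scale_pow (fD R) hl0]
      _ = (c*l) ^ 2 * (l⁻¹ * k) := by rw [Ik' hR]
      _ = c ^ 2 * l * k := by field_simp
  have hpot : (∫ x : ℝ, u x ^ 6) = (l * μ / m) ^ 3 * l⁻¹ * p := by
    calc ∫ x : ℝ, u x ^ 6
        = ∫ x : ℝ, c ^ 6 * fP R (l * x - (R+1)) ^ 6 := by
          congr 1; funext x; show (c * fP R (l * x - (R+1))) ^ _ = _; ring
      _ = c ^ 6 * ∫ x : ℝ, fP R (l * x - (R+1)) ^ 6 :=
          integral_const_mul _ _
      _ = c ^ 6 * (l⁻¹ * ∫ y : ℝ, fP R y ^ 6) := by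
          rw [scale_pow (fP R) hl0]
      _ = (l * μ / m) ^ 3 * l⁻¹ * p := by
          rw [Ip' hR, show c ^ 6 = (c ^ 2) ^ 3 by ring, hc2]; ring
  have henergy : energyLine u u' = l ^ 2 * E0 := by
    rw [energyLine, hkin, hpot, hc2, hE0def]
    field_simp
  -- FTC representation
  have hFTC : ∀ x : ℝ, u x = u 0 + ∫ t in (0:ℝ)..x, u' t := by
    intro x
    have hfP0 : fP R (l * 0 - (R+1)) = 0 := by
      rw [mul_zero, zero_sub, fP_lin1' hR (by linarith) (by linarith)]
      ring
    have h1 : ∫ t in (0:ℝ)..x, u' t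
        = c * (fP R (l * x - (R+1)) - fP R (l * 0 - (R+1))) := by
      calc ∫ t in (0:ℝ)..x, u' t
          = ∫ t in (0:ℝ)..x, (c * l) * fD R (l * t - (R+1)) := by
            simp only [hu'def]
        _ = (c * l) * ∫ t in (0:ℝ)..x, fD R (l * t - (R+1)) :=
            intervalIntegral.integral_const_mul _ _
        _ = (c * l) * (l⁻¹ • ∫ y in (l * 0 - (R+1))..(l * x - (R+1)), fD R y) := by
            rw [intervalIntegral.integral_comp_mul_sub (fD R) hl0.ne' (R+1)]
        _ = c * (fP R (l * x - (R+1)) - fP R (l * 0 - (R+1))) := by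
            rw [fP_FTC hR, smul_eq_mul]
            field_simp
    rw [h1, hu0, hfP0, zero_add]
    show c * fP R (l * x - (R + 1)) = _
    ring
  -- Memℒp
  have hucont : Continuous u := by
    apply continuous_const.mul ((fP_cont hR).comp
      ((continuous_const.mul continuous_id).sub continuous_const))
  have hVicc : (volume (Icc (0:ℝ) 1)) ≠ ⊤ := by
    rw [Real.volume_Icc]
    exact ENNReal.ofReal_ne_top
  have hmemu : MemLp u 2 volume := by
    apply MemLp.of_le (memLp_indicator_const 2 measurableSet_Icc (c:ℝ) (Or.inr hVicc))
      hucont.aestronglyMeasurable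
    filter_upwards with x
    by_cases hx : x ∈ Icc (0:ℝ) 1
    · rw [indicator_of_mem hx]
      rw [Real.norm_eq_abs, Real.norm_eq_abs]
      show |c * fP R (l * x - (R+1))| ≤ |c|
      rw [abs_mul]
      calc |c| * |fP R (l * x - (R+1))| ≤ |c| * 1 := by
            apply mul_le_mul_of_nonneg_left (fP_abs_le hR _) (abs_nonneg _)
        _ = |c| := mul_one _
    · rw [indicator_of_notMem hx, hsupp x hx]
  have hmemu' : MemLp u' 2 volume := by
    apply MemLp.of_le (memLp_indicator_const 2 measurableSet_Icc (c*l) (Or.inr hVicc))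
    · apply Measurable.aestronglyMeasurable
      exact (fD_meas.comp
        ((measurable_const.mul measurable_id).sub measurable_const)).const_mul _
    filter_upwards with x
    by_cases hx : x ∈ Icc (0:ℝ) 1
    · rw [indicator_of_mem hx]
      rw [Real.norm_eq_abs, Real.norm_eq_abs]
      show |c * l * fD R (l * x - (R+1))| ≤ |c * l|
      rw [abs_mul]
      calc |c * l| * |fD R (l * x - (R+1))| ≤ |c * l| * 1 := by
            apply mul_le_mul_of_nonneg_left (fD_abs_le hR _) (abs_nonneg _)
        _ = |c * l| := mul_one _
    · rw [indicator_of_notMem hx, hsupp' x hx]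
  exact ⟨u, u', ⟨hFTC, hmemu, hmemu'⟩, hmass, hsupp, by rw [henergy]; exact hlE⟩
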